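/- For 0 < μ < 1 let S_μ = {(N, k₁, k₂) ∈ ℝ³ : N ≥ 1, 1 ≤ k₂ ≤ k₁, N² k₁ k₂ ≤ μ^{−3}, N k₁⁵ ≤ μ^{−6} k₂} and let I(μ) = ∫_{S_μ} k₁ dN dk₁ dk₂. Then lim_{μ→0⁺} (log I(μ)) / (log(1/μ)) = 9/2. -/

import Mathlib

open MeasureTheory Filter Real

/-- The region of `(N, k₁, k₂)` for type IIB vacua `AdS₅ × S⁵/(ℤ_{k₁}×ℤ_{k₂})`
allowed by the cutoff `μ`. -/
def ads5Region (μ : ℝ) : Set (ℝ × ℝ × ℝ) :=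
  {x | 1 ≤ x.1 ∧ 1 ≤ x.2.2 ∧ x.2.2 ≤ x.2.1 ∧
    x.1 ^ 2 * x.2.1 * x.2.2 ≤ μ ^ (-(3 : ℝ)) ∧
    x.1 * x.2.1 ^ 5 ≤ μ ^ (-(6 : ℝ)) * x.2.2}

/-- The weighted count `I(μ) = ∫_{S_μ} k₁ dN dk₁ dk₂`. -/
noncomputable def ads5Count (μ : ℝ) : ℝ :=
  ∫ x in ads5Region μ, x.2.1

lemma measurableSet_ads5Region (μ : ℝ) : MeasurableSet (ads5Region μ) := by
  unfold ads5Region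
  apply MeasurableSet.inter
  · exact measurableSet_le measurable_const measurable_fst
  apply MeasurableSet.inter
  · exact measurableSet_le measurable_const (measurable_snd.comp measurable_snd)
  apply MeasurableSet.inter
  · exact measurableSet_le (measurable_snd.comp measurable_snd) (measurable_fst.comp measurable_snd)
  apply MeasurableSet.inter
  · exact measurableSet_le (((measurable_fst.pow_const 2).mul
      (measurable_fst.comp measurable_snd)).mul (measurable_snd.comp measurable_snd))
      measurable_const
  · exact measurableSet_le (measurable_fst.mul
      ((measurable_fst.comp measurable_snd).pow_const 5))
      (measurable_const.mul (measurable_snd.comp measurable_snd))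

lemma rpow_half_pow {μ : ℝ} (hμ : 0 < μ) (k : ℕ) (r : ℝ) (h : (-(1/2):ℝ) * k = r) :
    (μ ^ (-(1/2):ℝ)) ^ k = μ ^ r := by
  rw [← h, ← Real.rpow_natCast (μ ^ (-(1/2):ℝ)) k, ← Real.rpow_mul hμ.le]

lemma ads5Region_bounds {μ : ℝ} (hμ : 0 < μ) {x : ℝ × ℝ × ℝ} (hx : x ∈ ads5Region μ) :
    let m := μ ^ (-(1/2):ℝ)
    1 ≤ x.1 ∧ 1 ≤ x.2.2 ∧ x.2.2 ≤ x.2.1 ∧ x.1 ≤ m ^ 3 ∧ x.2.1 ≤ m ^ 3 ∧ x.2.2 ≤ m ^ 3 ∧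
      x.2.1 ≤ x.1 ^ (-(3/2):ℝ) * (m ^ 5 * x.2.2 ^ (-(2/3):ℝ)) := by
  intro m
  obtain ⟨h1, h2, h3, h4, h5⟩ := hx
  obtain ⟨N, a, b⟩ := x
  simp only at h1 h2 h3 h4 h5 ⊢
  have hm : 0 < m := Real.rpow_pos_of_pos hμ _
  have h6 : μ ^ (-(3:ℝ)) = m ^ 6 := (rpow_half_pow hμ 6 _ (by norm_num)).symm
  have h12 : μ ^ (-(6:ℝ)) = m ^ 12 := (rpow_half_pow hμ 12 _ (by norm_num)).symm
  rw [h6] at h4; rw [h12] at h5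
  have hN0 : (0:ℝ) < N := lt_of_lt_of_le one_pos h1
  have hb0 : (0:ℝ) < b := lt_of_lt_of_le one_pos h2
  have ha0 : (0:ℝ) < a := lt_of_lt_of_le hb0 h3
  have ha1 : (1:ℝ) ≤ a := le_trans h2 h3
  -- a ≤ m^3
  have ham : a ≤ m ^ 3 := by
    have h5' : a ^ 5 ≤ m ^ 12 * a := by
      nlinarith [mul_le_mul_of_nonneg_right h1 (pow_nonneg ha0.le 5),
        mul_le_mul_of_nonneg_left h3 (pow_nonneg hm.le 12)]
    have : a ^ 4 ≤ (m ^ 3) ^ 4 := by nlinarith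
    exact le_of_pow_le_pow_left₀ (by norm_num) (by positivity) this
  have hbm : b ≤ m ^ 3 := by
    have : b ^ 2 ≤ (m ^ 3) ^ 2 := by nlinarith
    exact le_of_pow_le_pow_left₀ (by norm_num) (by positivity) this
  have hNm : N ≤ m ^ 3 := by
    have hab : (1:ℝ) * 1 ≤ a * b := mul_le_mul ha1 h2 zero_le_one ha0.le
    have : N ^ 2 ≤ (m ^ 3) ^ 2 := by nlinarith [sq_nonneg N]
    exact le_of_pow_le_pow_left₀ (by norm_num) (by positivity) this
  refine ⟨h1, h2, h3, hNm, ham, hbm, ?_⟩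
  -- the key pointwise bound
  set P := N ^ ((3/2):ℝ) with hP
  set Q := b ^ ((2/3):ℝ) with hQ
  have hP0 : 0 < P := Real.rpow_pos_of_pos hN0 _
  have hQ0 : 0 < Q := Real.rpow_pos_of_pos hb0 _
  have hP18 : P ^ 18 = N ^ 27 := by
    rw [hP, ← Real.rpow_natCast (N ^ ((3/2):ℝ)) 18, ← Real.rpow_mul hN0.le,
      ← Real.rpow_natCast N 27]
    norm_num
  have hQ18 : Q ^ 18 = b ^ 12 := by
    rw [hQ, ← Real.rpow_natCast (b ^ ((2/3):ℝ)) 18, ← Real.rpow_mul hb0.le,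
      ← Real.rpow_natCast b 12]
    norm_num
  have hchain : (N * a ^ 5) * (N ^ 2 * a * b) ^ 13 ≤ (m ^ 12 * b) * (m ^ 6) ^ 13 := by
    apply mul_le_mul h5 (pow_le_pow_left₀ (by positivity) h4 13) (by positivity) (by positivity)
  have hkey18 : (a * P * Q) ^ 18 ≤ (m ^ 5) ^ 18 := by
    have hexp : (a * P * Q) ^ 18 = a ^ 18 * N ^ 27 * b ^ 12 := by
      rw [mul_pow, mul_pow, hP18, hQ18]
    rw [hexp]
    have h90 : a ^ 18 * N ^ 27 * b ^ 12 * b ≤ (m ^ 5) ^ 18 * b := by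
      calc a ^ 18 * N ^ 27 * b ^ 12 * b = (N * a ^ 5) * (N ^ 2 * a * b) ^ 13 := by ring
        _ ≤ (m ^ 12 * b) * (m ^ 6) ^ 13 := hchain
        _ = (m ^ 5) ^ 18 * b := by ring
    exact le_of_mul_le_mul_right h90 hb0
  have hkey : a * P * Q ≤ m ^ 5 :=
    le_of_pow_le_pow_left₀ (by norm_num) (by positivity) hkey18
  have : a ≤ m ^ 5 / (P * Q) := by
    rw [le_div_iff₀ (by positivity)]
    calc a * (P * Q) = a * P * Q := by ring
      _ ≤ m ^ 5 := hkey
  calc a ≤ m ^ 5 / (P * Q) := this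
    _ = P⁻¹ * (m ^ 5 * Q⁻¹) := by field_simp
    _ = N ^ (-(3/2):ℝ) * (m ^ 5 * b ^ (-(2/3):ℝ)) := by
        rw [Real.rpow_neg hN0.le, Real.rpow_neg hb0.le]

lemma ads5Count_upper {μ : ℝ} (hμ : 0 < μ) (hμ1 : μ ≤ 1) :
    ads5Count μ ≤ 6 * μ ^ (-(9/2):ℝ) := by
  set m := μ ^ (-(1/2):ℝ) with hmdef
  have hm : 0 < m := Real.rpow_pos_of_pos hμ _
  have hm1 : 1 ≤ m :=
    Real.one_le_rpow_of_pos_of_le_one_of_nonpos hμ hμ1 (by norm_num)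
  have h9 : μ ^ (-(9/2):ℝ) = m ^ 9 := (rpow_half_pow hμ 9 _ (by norm_num)).symm
  have hm3 : (1:ℝ) ≤ m ^ 3 := one_le_pow₀ hm1
  -- the majorant
  set f1 : ℝ → ℝ := (Set.Ici (1:ℝ)).indicator (fun N => N ^ (-(3/2):ℝ)) with hf1def
  set f2 : ℝ → ℝ := (Set.Ioc (0:ℝ) (m ^ 3)).indicator (fun _ => m ^ 5) with hf2def
  set f3 : ℝ → ℝ := (Set.Icc (1:ℝ) (m ^ 3)).indicator (fun b => b ^ (-(2/3):ℝ)) with hf3def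
  have hif1 : Integrable f1 := by
    rw [hf1def, integrable_indicator_iff measurableSet_Ici, integrableOn_Ici_iff_integrableOn_Ioi]
    exact integrableOn_Ioi_rpow_of_lt (by norm_num) one_pos
  have hif2 : Integrable f2 := by
    rw [hf2def, integrable_indicator_iff measurableSet_Ioc]
    exact (integrableOn_const_iff).mpr (Or.inr measure_Ioc_lt_top)
  have hcont3 : ContinuousOn (fun b : ℝ => b ^ (-(2/3):ℝ)) (Set.Icc 1 (m ^ 3)) := by
    intro x hx
    exact (Real.continuousAt_rpow_const x _ (Or.inl (by linarith [hx.1]))).continuousWithinAt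
  have hif3 : Integrable f3 := by
    rw [hf3def, integrable_indicator_iff measurableSet_Icc]
    exact hcont3.integrableOn_Icc
  have hI1 : ∫ N, f1 N = 2 := by
    rw [hf1def, integral_indicator measurableSet_Ici, integral_Ici_eq_integral_Ioi,
      integral_Ioi_rpow_of_lt (by norm_num) one_pos]
    norm_num
  have hI2 : ∫ k, f2 k = m ^ 5 * m ^ 3 := by
    rw [hf2def, integral_indicator measurableSet_Ioc, setIntegral_const, smul_eq_mul,
      Real.volume_real_Ioc_of_le (by linarith)]
    ring
  have hI3 : ∫ b, f3 b = 3 * m - 3 := by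
    rw [hf3def, integral_indicator measurableSet_Icc, integral_Icc_eq_integral_Ioc,
      ← intervalIntegral.integral_of_le hm3,
      integral_rpow (Or.inl (by norm_num))]
    have hmm : ((m:ℝ) ^ 3) ^ ((-(2/3):ℝ) + 1) = m := by
      rw [← Real.rpow_natCast m 3, ← Real.rpow_mul hm.le]
      norm_num
    have h1m : (1:ℝ) ^ ((-(2/3):ℝ) + 1) = 1 := Real.one_rpow _
    rw [hmm, h1m]
    ring
  rw [h9]
  have hS := measurableSet_ads5Region μ
  have hig : Integrable (fun x : ℝ × ℝ × ℝ => f1 x.1 * (f2 x.2.1 * f3 x.2.2)) := by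
    have : Integrable (fun y : ℝ × ℝ => f2 y.1 * f3 y.2)
        ((volume : Measure ℝ).prod (volume : Measure ℝ)) := hif2.mul_prod hif3
    exact hif1.mul_prod this
  have hnn : ∀ y : ℝ × ℝ × ℝ, y ∈ ads5Region μ → (0:ℝ) ≤ y.2.1 := fun y hy => by
    have := hy.2.1; have := hy.2.2.1; linarith
  have hg0 : ∀ x : ℝ × ℝ × ℝ, 0 ≤ f1 x.1 * (f2 x.2.1 * f3 x.2.2) := by
    intro x
    simp only [hf1def, hf2def, hf3def]
    refine mul_nonneg ?_ (mul_nonneg ?_ ?_) <;> apply Set.indicator_nonneg <;> intro y hy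
    · exact Real.rpow_nonneg (by linarith [Set.mem_Ici.mp hy]) _
    · positivity
    · exact Real.rpow_nonneg (by linarith [hy.1]) _
  have hpoint : ∀ x, (ads5Region μ).indicator (fun x : ℝ × ℝ × ℝ => x.2.1) x ≤
      f1 x.1 * (f2 x.2.1 * f3 x.2.2) := by
    intro x
    by_cases hx : x ∈ ads5Region μ
    · rw [Set.indicator_of_mem hx]
      have hb := ads5Region_bounds hμ hx
      simp only at hb
      obtain ⟨h1, h2, h3, hNm, ham, hbm, hkey⟩ := hb
      have hf1x : f1 x.1 = x.1 ^ (-(3/2):ℝ) := by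
        rw [hf1def]; exact Set.indicator_of_mem h1 _
      have hf2x : f2 x.2.1 = m ^ 5 := by
        rw [hf2def]
        exact Set.indicator_of_mem (show x.2.1 ∈ Set.Ioc 0 (m ^ 3) from ⟨by linarith, ham⟩) _
      have hf3x : f3 x.2.2 = x.2.2 ^ (-(2/3):ℝ) := by
        rw [hf3def]
        exact Set.indicator_of_mem (show x.2.2 ∈ Set.Icc 1 (m ^ 3) from ⟨h2, hbm⟩) _
      rw [hf1x, hf2x, hf3x]
      exact hkey
    · rw [Set.indicator_of_notMem hx]
      exact hg0 x
  calc ads5Count μ = ∫ x, (ads5Region μ).indicator (fun x : ℝ × ℝ × ℝ => x.2.1) x :=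
        (integral_indicator hS).symm
    _ ≤ ∫ x : ℝ × ℝ × ℝ, f1 x.1 * (f2 x.2.1 * f3 x.2.2) := integral_mono_of_nonneg
        (ae_of_all _ fun x => Set.indicator_nonneg hnn x) hig (ae_of_all _ hpoint)
    _ = (∫ N, f1 N) * ((∫ k, f2 k) * (∫ b, f3 b)) := by
        have h2 : (∫ y : ℝ × ℝ, f2 y.1 * f3 y.2) = (∫ k, f2 k) * (∫ b, f3 b) :=
          integral_prod_mul f2 f3
        have h1 : (∫ x : ℝ × ℝ × ℝ, f1 x.1 * (f2 x.2.1 * f3 x.2.2)) =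
            (∫ N, f1 N) * (∫ y : ℝ × ℝ, f2 y.1 * f3 y.2) :=
          integral_prod_mul f1 (fun y : ℝ × ℝ => f2 y.1 * f3 y.2)
        rw [h1, h2]
    _ = 2 * (m ^ 5 * m ^ 3 * (3 * m - 3)) := by rw [hI1, hI2, hI3]
    _ ≤ 6 * m ^ 9 := by nlinarith [pow_nonneg hm.le 8]

lemma ads5Count_lower {μ : ℝ} (hμ : 0 < μ) (hμ16 : μ ≤ 1/16) :
    7/4608 * μ ^ (-(9/2):ℝ) ≤ ads5Count μ := by
  set m := μ ^ (-(1/2):ℝ) with hmdef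
  have hm : 0 < m := Real.rpow_pos_of_pos hμ _
  have h9 : μ ^ (-(9/2):ℝ) = m ^ 9 := (rpow_half_pow hμ 9 _ (by norm_num)).symm
  have hm2 : (16:ℝ) ≤ m ^ 2 := by
    rw [hmdef, rpow_half_pow hμ 2 (-1) (by norm_num), Real.rpow_neg_one]
    calc (16:ℝ) = (1/16)⁻¹ := by norm_num
      _ ≤ μ⁻¹ := inv_anti₀ hμ hμ16
  have hm4 : (4:ℝ) ≤ m := by nlinarith
  have hm3 : (64:ℝ) ≤ m ^ 3 := by nlinarith
  have h6 : μ ^ (-(3:ℝ)) = m ^ 6 := (rpow_half_pow hμ 6 _ (by norm_num)).symm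
  have h12 : μ ^ (-(6:ℝ)) = m ^ 12 := (rpow_half_pow hμ 12 _ (by norm_num)).symm
  set B : Set (ℝ × ℝ × ℝ) :=
    Set.Icc (1:ℝ) 2 ×ˢ (Set.Icc (m^3/4) (m^3/3) ×ˢ Set.Icc (m^3/16) (m^3/8)) with hBdef
  have hBS : B ⊆ ads5Region μ := by
    intro x hx
    simp only [hBdef, Set.mem_prod, Set.mem_Icc] at hx
    obtain ⟨⟨hN1, hN2⟩, ⟨ha1, ha2⟩, ⟨hb1, hb2⟩⟩ := hx
    have hb0 : 0 < x.2.2 := by linarith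
    have ha0 : 0 < x.2.1 := by linarith
    simp only [ads5Region, Set.mem_setOf_eq, h6, h12]
    refine ⟨hN1, by linarith, by linarith, ?_, ?_⟩
    · have hsq : x.1 ^ 2 ≤ 4 := by nlinarith
      calc x.1 ^ 2 * x.2.1 * x.2.2 ≤ 4 * (m^3/3) * (m^3/8) := by
            apply mul_le_mul (mul_le_mul hsq ha2 ha0.le (by norm_num)) hb2 hb0.le (by positivity)
        _ ≤ m ^ 6 := by nlinarith [pow_nonneg hm.le 6]
    · have ha5 : x.2.1 ^ 5 ≤ (m^3/3) ^ 5 := pow_le_pow_left₀ ha0.le ha2 5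
      calc x.1 * x.2.1 ^ 5 ≤ 2 * (m^3/3) ^ 5 :=
            mul_le_mul hN2 ha5 (by positivity) (by norm_num)
        _ ≤ m ^ 12 * (m^3/16) := by nlinarith [pow_nonneg hm.le 15]
        _ ≤ m ^ 12 * x.2.2 := mul_le_mul_of_nonneg_left hb1 (pow_nonneg hm.le 12)
  have hsub : ads5Region μ ⊆ Set.Icc ((1:ℝ),(1:ℝ),(1:ℝ)) (m^3, m^3, m^3) := by
    intro x hx
    have hb := ads5Region_bounds hμ hx
    simp only at hb
    obtain ⟨h1, h2, h3, hNm, ham, hbm, -⟩ := hb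
    simp only [Set.mem_Icc, Prod.le_def]
    exact ⟨⟨h1, le_trans h2 h3, h2⟩, hNm, ham, hbm⟩
  have hint : IntegrableOn (fun x : ℝ × ℝ × ℝ => x.2.1) (ads5Region μ) := by
    apply MeasureTheory.IntegrableOn.mono_set _ hsub
    apply ContinuousOn.integrableOn_compact isCompact_Icc
    exact (continuous_fst.comp continuous_snd).continuousOn
  have hnn : 0 ≤ᵐ[volume.restrict (ads5Region μ)] fun x : ℝ × ℝ × ℝ => x.2.1 := by
    refine (ae_restrict_iff' (measurableSet_ads5Region μ)).mpr (ae_of_all _ ?_)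
    intro x hx
    show (0:ℝ) ≤ x.2.1
    have := hx.2.1; have := hx.2.2.1; linarith
  have hmono : ∫ x in B, (fun x : ℝ × ℝ × ℝ => x.2.1) x ≤ ads5Count μ :=
    setIntegral_mono_set hint hnn (HasSubset.Subset.eventuallyLE hBS)
  have hbox1 : ∫ x in B, (fun x : ℝ × ℝ × ℝ => x.2.1) x =
      (∫ N in Set.Icc (1:ℝ) 2, (1:ℝ)) *
        (∫ y in (Set.Icc (m^3/4) (m^3/3) ×ˢ Set.Icc (m^3/16) (m^3/8)), y.1) := by
    have := setIntegral_prod_mul (μ := (volume : Measure ℝ)) (ν := (volume : Measure (ℝ × ℝ))) (fun _ : ℝ => (1:ℝ)) (fun y : ℝ × ℝ => y.1)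
      (Set.Icc (1:ℝ) 2) (Set.Icc (m^3/4) (m^3/3) ×ˢ Set.Icc (m^3/16) (m^3/8))
    simp only [one_mul] at this
    exact this
  have hbox2 : (∫ y in (Set.Icc (m^3/4) (m^3/3) ×ˢ Set.Icc (m^3/16) (m^3/8)),
      (fun y : ℝ × ℝ => y.1) y) =
      (∫ k in Set.Icc (m^3/4) (m^3/3), k) * (∫ b in Set.Icc (m^3/16) (m^3/8), (1:ℝ)) := by
    have := setIntegral_prod_mul (μ := (volume : Measure ℝ)) (ν := (volume : Measure ℝ)) (fun k : ℝ => k) (fun _ : ℝ => (1:ℝ))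
      (Set.Icc (m^3/4) (m^3/3)) (Set.Icc (m^3/16) (m^3/8))
    simp only [mul_one] at this
    exact this
  have hone : ∀ a b : ℝ, a ≤ b → ∫ x in Set.Icc a b, (1:ℝ) = b - a := by
    intro a b hab
    rw [setIntegral_const, Real.volume_real_Icc_of_le hab, smul_eq_mul]
    ring
  have hid : ∫ k in Set.Icc (m^3/4) (m^3/3), k = ((m^3/3)^2 - (m^3/4)^2)/2 := by
    rw [integral_Icc_eq_integral_Ioc, ← intervalIntegral.integral_of_le (by linarith : m^3/4 ≤ m^3/3),
      integral_id]
  calc 7/4608 * μ ^ (-(9/2):ℝ) = 7/4608 * m ^ 9 := by rw [h9]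
    _ = (2 - 1) * ((((m^3/3)^2 - (m^3/4)^2)/2) * (m^3/8 - m^3/16)) := by ring
    _ = ∫ x in B, (fun x : ℝ × ℝ × ℝ => x.2.1) x := by
        rw [hbox1, hbox2, hone 1 2 (by norm_num), hone (m^3/16) (m^3/8) (by linarith), hid]
    _ ≤ ads5Count μ := hmono

/-- The count `𝔑^{(Q=4)}_{AdS₅}(μ)` grows like `μ^{−9/2}` up to subpolynomial
factors: `lim_{μ→0⁺} (log I(μ))/(log(1/μ)) = 9/2`. -/
theorem ads5_count_growth :
    Tendsto (fun μ : ℝ => Real.log (ads5Count μ) / Real.log (1 / μ))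
      (nhdsWithin 0 (Set.Ioi 0)) (nhds (9 / 2)) := by
  have htop : Tendsto (fun μ : ℝ => Real.log (1 / μ)) (nhdsWithin 0 (Set.Ioi 0)) atTop := by
    have h := tendsto_neg_atBot_atTop.comp Real.tendsto_log_nhdsGT_zero
    refine h.congr fun μ => ?_
    simp [one_div, Real.log_inv]
  have hconst : ∀ c : ℝ, Tendsto (fun μ : ℝ => 9/2 + Real.log c / Real.log (1 / μ))
      (nhdsWithin 0 (Set.Ioi 0)) (nhds (9/2)) := by
    intro c
    have := tendsto_const_nhds (α := ℝ) (x := (9/2:ℝ))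
      (f := nhdsWithin (0:ℝ) (Set.Ioi 0)) |>.add (Tendsto.div_atTop
        (tendsto_const_nhds (x := Real.log c)) htop)
    simpa using this
  refine tendsto_of_tendsto_of_tendsto_of_le_of_le' (hconst (7/4608)) (hconst 6) ?_ ?_ <;>
    · filter_upwards [Ioo_mem_nhdsGT_of_mem (by norm_num : (0:ℝ) ∈ Set.Ico 0 (1/16))]
        with μ hμx
      obtain ⟨hμ0, hμ16⟩ := hμx
      have hL : 0 < Real.log (1 / μ) := Real.log_pos (by rw [lt_div_iff₀ hμ0]; linarith)
      have hlow := ads5Count_lower hμ0 hμ16.le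
      have hupp := ads5Count_upper hμ0 (by linarith)
      have hrp : (0:ℝ) < μ ^ (-(9/2):ℝ) := Real.rpow_pos_of_pos hμ0 _
      have hpos : 0 < ads5Count μ := lt_of_lt_of_le (by positivity) hlow
      have hlog9 : Real.log (μ ^ (-(9/2):ℝ)) = 9/2 * Real.log (1 / μ) := by
        rw [Real.log_rpow hμ0, one_div, Real.log_inv]; ring
      first
      | · -- lower bound
          have h1 : Real.log (7/4608 * μ ^ (-(9/2):ℝ)) ≤ Real.log (ads5Count μ) :=
            Real.log_le_log (by positivity) hlow
          rw [Real.log_mul (by norm_num) (ne_of_gt hrp), hlog9] at h1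
          have h2 : (Real.log (7/4608) + 9/2 * Real.log (1 / μ)) / Real.log (1 / μ) =
              9/2 + Real.log (7/4608) / Real.log (1 / μ) := by
            field_simp
            ring
          calc 9/2 + Real.log (7/4608) / Real.log (1 / μ)
              = (Real.log (7/4608) + 9/2 * Real.log (1 / μ)) / Real.log (1 / μ) := h2.symm
            _ ≤ Real.log (ads5Count μ) / Real.log (1 / μ) :=
                (div_le_div_iff_of_pos_right hL).mpr h1
      | · -- upper bound
          have h1 : Real.log (ads5Count μ) ≤ Real.log (6 * μ ^ (-(9/2):ℝ)) :=
            Real.log_le_log hpos hupp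
          rw [Real.log_mul (by norm_num) (ne_of_gt hrp), hlog9] at h1
          have h2 : (Real.log 6 + 9/2 * Real.log (1 / μ)) / Real.log (1 / μ) =
              9/2 + Real.log 6 / Real.log (1 / μ) := by
            field_simp
            ring
          calc Real.log (ads5Count μ) / Real.log (1 / μ)
              ≤ (Real.log 6 + 9/2 * Real.log (1 / μ)) / Real.log (1 / μ) :=
                (div_le_div_iff_of_pos_right hL).mpr h1
            _ = 9/2 + Real.log 6 / Real.log (1 / μ) := h2
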